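/- Let s₂,…,s_{m-1} ∈ F_q \ {0,1} and t be such that all relevant sumsets avoid wraparound. Define A₀ = Σⱼ (1/(1-sⱼ))·[t] and A₁ = Σⱼ (1/sⱼ)·[t] as sumsets in F_q. Then for each i ∈ {2,…,m-1}, the set (1-sᵢ)·A₀ + sᵢ·A₁ is contained in {2,…,2t} + Σ_{j≠i} ((1-sᵢ)/(1-sⱼ))·[t] + Σ_{j≠i} (sᵢ/sⱼ)·[t], and hence has cardinality at most 2t·t^{2(m-4)+2} = 2t^{2m-5}. -/

import Mathlib

open Finset Pointwise

lemma card_erased_image {n t q : ℕ} (i : Fin n) (c : Fin n → ZMod q) :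
    ((Finset.univ : Finset (Fin n → Fin t)).image
      (fun a => ∑ j ∈ Finset.univ.erase i, c j * (((a j : ℕ) + 1 : ℕ) : ZMod q))).card
      ≤ t ^ (n - 1) := by
  set S := (Finset.univ.erase i : Finset (Fin n))
  have hfac : (Finset.univ : Finset (Fin n → Fin t)).image
      (fun a => ∑ j ∈ S, c j * (((a j : ℕ) + 1 : ℕ) : ZMod q))
      = ((Finset.univ : Finset (Fin n → Fin t)).image
          (fun a => (fun j : {x // x ∈ S} => a j))).image
        (fun b => ∑ j ∈ S.attach, c j * (((b j : ℕ) + 1 : ℕ) : ZMod q)) := by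
    rw [Finset.image_image]
    apply Finset.image_congr
    intro a _
    simp only [Function.comp]
    rw [Finset.sum_attach S (fun j => c j * (((a j : ℕ) + 1 : ℕ) : ZMod q))]
  rw [hfac]
  calc _ ≤ ((Finset.univ : Finset (Fin n → Fin t)).image
          (fun a => (fun j : {x // x ∈ S} => a j))).card := Finset.card_image_le
    _ ≤ (Finset.univ : Finset ({x // x ∈ S} → Fin t)).card := Finset.card_le_univ _
    _ = t ^ (n - 1) := by
        rw [Finset.card_univ, Fintype.card_fun, Fintype.card_coe, Fintype.card_fin]
        congr 1
        rw [Finset.card_erase_of_mem (Finset.mem_univ i), Finset.card_univ, Fintype.card_fin]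

theorem evaluation_lists_small
    (q : ℕ) [Fact q.Prime] (m t : ℕ) (hm : 3 ≤ m) (ht : 0 < t) (htq : 2 * t < q)
    (s : Fin (m - 2) → ZMod q) (hs0 : ∀ i, s i ≠ 0) (hs1 : ∀ i, s i ≠ 1) :
    ∀ i : Fin (m - 2),
      ((1 - s i) • ((Finset.univ : Finset (Fin (m - 2) → Fin t)).image
          (fun a => ∑ j, (1 - s j)⁻¹ * (((a j : ℕ) + 1 : ℕ) : ZMod q)))
        + (s i) • ((Finset.univ : Finset (Fin (m - 2) → Fin t)).image
          (fun a => ∑ j, (s j)⁻¹ * (((a j : ℕ) + 1 : ℕ) : ZMod q)))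
        ⊆ (Finset.Icc 2 (2 * t)).image (fun j : ℕ => (j : ZMod q))
          + ((Finset.univ : Finset (Fin (m - 2) → Fin t)).image
              (fun a => ∑ j ∈ Finset.univ.erase i,
                ((1 - s i) / (1 - s j)) * (((a j : ℕ) + 1 : ℕ) : ZMod q)))
          + ((Finset.univ : Finset (Fin (m - 2) → Fin t)).image
              (fun a => ∑ j ∈ Finset.univ.erase i,
                (s i / s j) * (((a j : ℕ) + 1 : ℕ) : ZMod q))))
      ∧ ((1 - s i) • ((Finset.univ : Finset (Fin (m - 2) → Fin t)).image
            (fun a => ∑ j, (1 - s j)⁻¹ * (((a j : ℕ) + 1 : ℕ) : ZMod q)))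
          + (s i) • ((Finset.univ : Finset (Fin (m - 2) → Fin t)).image
            (fun a => ∑ j, (s j)⁻¹ * (((a j : ℕ) + 1 : ℕ) : ZMod q)))).card
        ≤ 2 * t ^ (2 * m - 5) := by
  intro i
  have h1i : (1 : ZMod q) - s i ≠ 0 := sub_ne_zero_of_ne (Ne.symm (hs1 i))
  have hsub : ((1 - s i) • ((Finset.univ : Finset (Fin (m - 2) → Fin t)).image
          (fun a => ∑ j, (1 - s j)⁻¹ * (((a j : ℕ) + 1 : ℕ) : ZMod q)))
        + (s i) • ((Finset.univ : Finset (Fin (m - 2) → Fin t)).image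
          (fun a => ∑ j, (s j)⁻¹ * (((a j : ℕ) + 1 : ℕ) : ZMod q)))
        ⊆ (Finset.Icc 2 (2 * t)).image (fun j : ℕ => (j : ZMod q))
          + ((Finset.univ : Finset (Fin (m - 2) → Fin t)).image
              (fun a => ∑ j ∈ Finset.univ.erase i,
                ((1 - s i) / (1 - s j)) * (((a j : ℕ) + 1 : ℕ) : ZMod q)))
          + ((Finset.univ : Finset (Fin (m - 2) → Fin t)).image
              (fun a => ∑ j ∈ Finset.univ.erase i,
                (s i / s j) * (((a j : ℕ) + 1 : ℕ) : ZMod q)))) := ?_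
  refine ⟨hsub, ?_⟩
  · -- cardinality
    calc _ ≤ ((Finset.Icc 2 (2 * t)).image (fun j : ℕ => (j : ZMod q))
          + ((Finset.univ : Finset (Fin (m - 2) → Fin t)).image
              (fun a => ∑ j ∈ Finset.univ.erase i,
                ((1 - s i) / (1 - s j)) * (((a j : ℕ) + 1 : ℕ) : ZMod q)))
          + ((Finset.univ : Finset (Fin (m - 2) → Fin t)).image
              (fun a => ∑ j ∈ Finset.univ.erase i,
                (s i / s j) * (((a j : ℕ) + 1 : ℕ) : ZMod q)))).card :=
        Finset.card_le_card hsub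
      _ ≤ _ := ?_
    calc _ ≤ ((Finset.Icc 2 (2 * t)).image (fun j : ℕ => (j : ZMod q))
          + ((Finset.univ : Finset (Fin (m - 2) → Fin t)).image
              (fun a => ∑ j ∈ Finset.univ.erase i,
                ((1 - s i) / (1 - s j)) * (((a j : ℕ) + 1 : ℕ) : ZMod q)))).card
          * ((Finset.univ : Finset (Fin (m - 2) → Fin t)).image
              (fun a => ∑ j ∈ Finset.univ.erase i,
                (s i / s j) * (((a j : ℕ) + 1 : ℕ) : ZMod q))).card := Finset.card_add_le
      _ ≤ ((Finset.Icc 2 (2 * t)).image (fun j : ℕ => (j : ZMod q))).card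
          * ((Finset.univ : Finset (Fin (m - 2) → Fin t)).image
              (fun a => ∑ j ∈ Finset.univ.erase i,
                ((1 - s i) / (1 - s j)) * (((a j : ℕ) + 1 : ℕ) : ZMod q))).card
          * ((Finset.univ : Finset (Fin (m - 2) → Fin t)).image
              (fun a => ∑ j ∈ Finset.univ.erase i,
                (s i / s j) * (((a j : ℕ) + 1 : ℕ) : ZMod q))).card := by
        exact Nat.mul_le_mul_right _ Finset.card_add_le
      _ ≤ (2 * t) * t ^ (m - 2 - 1) * t ^ (m - 2 - 1) := by
        apply Nat.mul_le_mul
        apply Nat.mul_le_mul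
        · calc _ ≤ (Finset.Icc 2 (2 * t)).card := Finset.card_image_le
            _ ≤ 2 * t := by rw [Nat.card_Icc]; omega
        · exact card_erased_image i _
        · exact card_erased_image i _
      _ ≤ 2 * t ^ (2 * m - 5) := by
        have he : 2 * m - 5 = 1 + (m - 2 - 1) + (m - 2 - 1) := by omega
        rw [he, pow_add, pow_add, pow_one]
        exact le_of_eq (by ring)
  · -- subset
    intro x hx
    rw [Finset.mem_add] at hx
    obtain ⟨y, hy, z, hz, hyz⟩ := hx
    rw [Finset.mem_smul_finset] at hy hz
    obtain ⟨y', hy', rfl⟩ := hy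
    obtain ⟨z', hz', rfl⟩ := hz
    rw [Finset.mem_image] at hy' hz'
    obtain ⟨a, -, rfl⟩ := hy'
    obtain ⟨b, -, rfl⟩ := hz'
    rw [Finset.mem_add]
    refine ⟨((((a i : ℕ) + 1) + ((b i : ℕ) + 1) : ℕ) : ZMod q)
        + ∑ j ∈ Finset.univ.erase i,
            ((1 - s i) / (1 - s j)) * (((a j : ℕ) + 1 : ℕ) : ZMod q),
      ?_, _, Finset.mem_image_of_mem _ (Finset.mem_univ b), ?_⟩
    · rw [Finset.mem_add]
      refine ⟨((((a i : ℕ) + 1) + ((b i : ℕ) + 1) : ℕ) : ZMod q), ?_, _,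
        Finset.mem_image_of_mem _ (Finset.mem_univ a), rfl⟩
      apply Finset.mem_image_of_mem
      rw [Finset.mem_Icc]
      have := (a i).2
      have := (b i).2
      omega
    · rw [← hyz]
      simp only [smul_eq_mul]
      rw [Finset.mul_sum, Finset.mul_sum,
        ← Finset.add_sum_erase _ _ (Finset.mem_univ i),
        ← Finset.add_sum_erase _ (fun j => s i * ((s j)⁻¹ * (((b j : ℕ) + 1 : ℕ) : ZMod q)))
          (Finset.mem_univ i)]
      push_cast
      rw [← mul_assoc, ← mul_assoc, mul_inv_cancel₀ h1i, mul_inv_cancel₀ (hs0 i), one_mul, one_mul]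
      have e1 : ∀ j ∈ Finset.univ.erase i,
          (1 - s i) * ((1 - s j)⁻¹ * (((a j : ℕ) : ZMod q) + 1))
          = ((1 - s i) / (1 - s j)) * (((a j : ℕ) : ZMod q) + 1) := by
        intro j _; rw [div_eq_mul_inv]; ring
      have e2 : ∀ j ∈ Finset.univ.erase i,
          s i * ((s j)⁻¹ * (((b j : ℕ) : ZMod q) + 1))
          = (s i / s j) * (((b j : ℕ) : ZMod q) + 1) := by
        intro j _; rw [div_eq_mul_inv]; ring
      rw [Finset.sum_congr rfl e1, Finset.sum_congr rfl e2]
      ring
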